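/- For n ≥ 1 and t ≥ 1, the trace norm of A = Σ_{k ∈ Ω_n} Σ_{i : Fin t → (Fin n → ZMod 2)} Σ_{x : Fin t → ZMod 2, x ≠ 0} E(i, fun s ↦ i s + (x s)•k) satisfies ‖A‖_tr ≤ 2^{nt} · √(2^{n−1}·(2^t − 1)). -/

import Mathlib

open Matrix Finset ComplexOrder

/-- Hamming weight of a bit string. -/
def hammingW {n : ℕ} (ν : Fin n → ZMod 2) : ℕ :=
  (Finset.univ.filter fun l => ν l = 1).card

/-- `Ω_n`: the bit strings of length `n` with odd Hamming weight. -/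
def Omega (n : ℕ) : Finset (Fin n → ZMod 2) :=
  Finset.univ.filter fun k => Odd (hammingW k)

/-- `|A|` is the positive semidefinite square root of `AᴴA`. -/
noncomputable def matAbs {m : Type*} [Fintype m] [DecidableEq m] (A : Matrix m m ℂ) :
    Matrix m m ℂ :=
  ((Matrix.posSemidef_conjTranspose_mul_self A).isHermitian.eigenvectorUnitary : Matrix m m ℂ) *
    diagonal (((↑) : ℝ → ℂ) ∘ (√·) ∘
      (Matrix.posSemidef_conjTranspose_mul_self A).isHermitian.eigenvalues) *
    (star (Matrix.posSemidef_conjTranspose_mul_self A).isHermitian.eigenvectorUnitary :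
      Matrix m m ℂ)

/-- The trace norm `‖A‖_tr = tr |A|` (a real number). -/
noncomputable def traceNorm {m : Type*} [Fintype m] [DecidableEq m] (A : Matrix m m ℂ) : ℝ :=
  (matAbs A).trace.re

/- ### Auxiliary lemmas -/

lemma frob_trace_aux {m : Type*} [Fintype m] [DecidableEq m] (M : Matrix m m ℂ) :
    (Mᴴ * M).trace.re = ∑ j, ∑ i, Complex.normSq (M i j) := by
  simp only [Matrix.trace, Matrix.diag, Matrix.mul_apply, Matrix.conjTranspose_apply,
    Complex.re_sum, Complex.normSq_apply, Complex.mul_re, Complex.star_def,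
    Complex.conj_re, Complex.conj_im]
  simp [sq]

/-- Cauchy–Schwarz style bound: `‖A‖_tr ≤ √(N · ‖A‖_F²)`. -/
lemma traceNorm_le_sqrt_aux {m : Type*} [Fintype m] [DecidableEq m] (A : Matrix m m ℂ) :
    traceNorm A ≤ Real.sqrt (Fintype.card m * ∑ i, ∑ j, Complex.normSq (A i j)) := by
  set B := matAbs A with hBdef
  have hB : B.PosSemidef := by
    have hP := Matrix.posSemidef_conjTranspose_mul_self A
    have hD : (diagonal (((↑) : ℝ → ℂ) ∘ (√·) ∘ hP.isHermitian.eigenvalues)).PosSemidef := by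
      rw [posSemidef_diagonal_iff]
      intro i
      simp only [Function.comp_apply, Complex.zero_le_real]
      exact Real.sqrt_nonneg _
    have := hD.mul_mul_conjTranspose_same (hP.isHermitian.eigenvectorUnitary : Matrix m m ℂ)
    rw [hBdef, matAbs]
    simpa only [Unitary.coe_star, Matrix.star_eq_conjTranspose] using this
  have hBB : B * B = Aᴴ * A := by
    have hP := Matrix.posSemidef_conjTranspose_mul_self A
    have hU := Unitary.coe_star_mul_self hP.isHermitian.eigenvectorUnitary
    have hD : diagonal (((↑) : ℝ → ℂ) ∘ (√·) ∘ hP.isHermitian.eigenvalues) *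
        diagonal (((↑) : ℝ → ℂ) ∘ (√·) ∘ hP.isHermitian.eigenvalues)
        = diagonal (RCLike.ofReal ∘ hP.isHermitian.eigenvalues) := by
      rw [diagonal_mul_diagonal]
      congr 1
      funext i
      simp only [Function.comp_apply]
      rw [← Complex.ofReal_mul, Real.mul_self_sqrt (hP.eigenvalues_nonneg i)]
      rfl
    conv_rhs => rw [hP.isHermitian.spectral_theorem, Unitary.conjStarAlgAut_apply, ← hD]
    simp only [hBdef, matAbs, mul_assoc]
    rw [← mul_assoc _ (hP.isHermitian.eigenvectorUnitary : Matrix m m ℂ), hU, one_mul]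
  have htr : traceNorm A = ∑ i, (B i i).re := by
    simp [traceNorm, Matrix.trace, Matrix.diag, Complex.re_sum, hBdef]
  have h1 : (∑ i, (B i i).re) ^ 2 ≤ (Fintype.card m : ℝ) * ∑ i, (B i i).re ^ 2 := by
    simpa using sq_sum_le_card_mul_sum_sq (s := (univ : Finset m)) (f := fun i => (B i i).re)
  have h2 : ∑ i, (B i i).re ^ 2 ≤ ∑ i, ∑ j, Complex.normSq (B i j) := by
    apply Finset.sum_le_sum
    intro i _
    calc (B i i).re ^ 2 ≤ Complex.normSq (B i i) := by
          rw [Complex.normSq_apply]; nlinarith [sq_nonneg (B i i).im]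
      _ ≤ ∑ j, Complex.normSq (B i j) :=
          Finset.single_le_sum (fun j _ => Complex.normSq_nonneg _) (mem_univ i)
  have h3 : ∑ i, ∑ j, Complex.normSq (B i j) = ∑ i, ∑ j, Complex.normSq (A i j) := by
    have : (Bᴴ * B).trace.re = (Aᴴ * A).trace.re := by rw [hB.1, hBB]
    rw [frob_trace_aux, frob_trace_aux] at this
    rw [Finset.sum_comm, this, Finset.sum_comm]
  rw [htr]
  apply Real.le_sqrt_of_sq_le
  calc (∑ i, (B i i).re) ^ 2 ≤ (Fintype.card m : ℝ) * ∑ i, (B i i).re ^ 2 := h1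
    _ ≤ (Fintype.card m : ℝ) * ∑ i, ∑ j, Complex.normSq (B i j) := by
        apply mul_le_mul_of_nonneg_left h2 (by positivity)
    _ = _ := by rw [h3]

lemma odd_iff_sum_aux {n : ℕ} (k : Fin n → ZMod 2) :
    Odd (hammingW k) ↔ (∑ l, k l) = 1 := by
  have h1 : ∑ l, k l = ((hammingW k : ℕ) : ZMod 2) := by
    have h0 : ∀ a : ZMod 2, a = if a = 1 then 1 else 0 := by decide
    rw [hammingW, ← Finset.sum_boole]
    exact Finset.sum_congr rfl fun l _ => h0 (k l)
  have h2 : ∀ a : ZMod 2, a = 1 ↔ ¬ a = 0 := by decide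
  rw [h1, h2, ZMod.natCast_eq_zero_iff, Nat.odd_iff]
  omega

lemma card_Omega_aux (n : ℕ) (hn : 1 ≤ n) : (Omega n).card = 2 ^ (n - 1) := by
  classical
  have i0 : Fin n := ⟨0, hn⟩
  set f : (Fin n → ZMod 2) → (Fin n → ZMod 2) := fun k => k + Pi.single i0 1 with hf
  have hsum : ∀ k, (∑ l, f k l) = (∑ l, k l) + 1 := by
    intro k; simp [hf, Finset.sum_add_distrib, Finset.sum_pi_single]
  have hinv : ∀ k, f (f k) = k := by
    intro k
    have : (Pi.single i0 1 : Fin n → ZMod 2) + Pi.single i0 1 = 0 := by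
      rw [← Pi.single_add, show (1 + 1 : ZMod 2) = 0 from rfl, Pi.single_zero]
    simp [hf, add_assoc, this]
  have hOmega : Omega n = univ.filter fun k => (∑ l, k l) = 1 := by
    apply Finset.filter_congr; intro k _; simpa using odd_iff_sum_aux k
  have hone : ∀ a : ZMod 2, ¬ a = 1 ↔ a = 0 := by decide
  have hcards : (univ.filter fun k : Fin n → ZMod 2 => (∑ l, k l) = 1).card
      = (univ.filter fun k : Fin n → ZMod 2 => ¬ (∑ l, k l) = 1).card := by
    apply Finset.card_bij' (fun k _ => f k) (fun k _ => f k)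
    · intro k hk
      simp only [mem_filter, mem_univ, true_and] at hk ⊢
      rw [hsum, hk]; decide
    · intro k hk
      simp only [mem_filter, mem_univ, true_and, hone] at hk ⊢
      rw [hsum, hk]; ring
    · intro k _; exact hinv k
    · intro k _; exact hinv k
  have htot : (univ.filter fun k : Fin n → ZMod 2 => (∑ l, k l) = 1).card
      + (univ.filter fun k : Fin n → ZMod 2 => ¬ (∑ l, k l) = 1).card = 2 ^ n := by
    rw [Finset.card_filter_add_card_filter_not]
    simp
  have hpow : 2 ^ n = 2 * 2 ^ (n - 1) := by
    conv_lhs => rw [show n = (n - 1) + 1 from (Nat.succ_pred_eq_of_pos hn).symm]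
    ring
  rw [← hcards, hpow] at htot
  rw [hOmega]
  refine Nat.eq_of_mul_eq_mul_left (show 0 < 2 by norm_num) ?_
  rw [two_mul]
  exact htot

lemma ne_zero_of_mem_Omega (n : ℕ) {k : Fin n → ZMod 2} (hk : k ∈ Omega n) : k ≠ 0 := by
  rintro rfl
  simp only [Omega, mem_filter, mem_univ, true_and] at hk
  have : hammingW (0 : Fin n → ZMod 2) = 0 := by simp [hammingW]
  rw [this] at hk
  exact Nat.not_odd_zero hk

lemma entry_eq_card_aux (n t : ℕ) (i j : Fin t → (Fin n → ZMod 2)) :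
    (∑ k ∈ Omega n, ∑ i' : Fin t → (Fin n → ZMod 2),
        ∑ x ∈ Finset.univ.filter (fun x : Fin t → ZMod 2 => x ≠ 0),
          Matrix.single i' (fun s => i' s + x s • k) (1 : ℂ)) i j
      = ((((Omega n) ×ˢ (univ.filter fun x : Fin t → ZMod 2 => x ≠ 0)).filter
          fun p => (fun s => i s + p.2 s • p.1) = j).card : ℂ) := by
  rw [Finset.card_filter, Nat.cast_sum, Finset.sum_product]
  simp only [Matrix.sum_apply, Matrix.single, Matrix.of_apply, ite_and]
  rw [Finset.sum_comm]
  rw [Finset.sum_eq_single i]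
  · simp
  · intro y _ hy; simp [hy]
  · intro h; exact absurd (Finset.mem_univ i) h

lemma card_fiber_le_one_aux (n t : ℕ) (i j : Fin t → (Fin n → ZMod 2)) :
    (((Omega n) ×ˢ (univ.filter fun x : Fin t → ZMod 2 => x ≠ 0)).filter
        fun p => (fun s => i s + p.2 s • p.1) = j).card ≤ 1 := by
  rw [Finset.card_le_one]
  rintro ⟨k, x⟩ hp ⟨k', x'⟩ hq
  simp only [mem_filter, mem_product, mem_univ, true_and] at hp hq
  obtain ⟨⟨hkΩ, hx⟩, hpj⟩ := hp
  obtain ⟨⟨hk'Ω, hx'⟩, hqj⟩ := hq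
  have key : ∀ s, x s • k = x' s • k' := by
    intro s
    have h1 := congrFun hpj s
    have h2 := congrFun hqj s
    exact add_left_cancel (h1.trans h2.symm)
  have hone : ∀ a : ZMod 2, a ≠ 0 → a = 1 := by decide
  have hk0 : k ≠ 0 := ne_zero_of_mem_Omega n hkΩ
  obtain ⟨s0, hs0⟩ : ∃ s, x s ≠ 0 := by
    by_contra h; push_neg at h; exact hx (funext h)
  have hxs0 : x s0 = 1 := hone _ hs0
  have hkk : k = x' s0 • k' := by have := key s0; rwa [hxs0, one_smul] at this
  have hx's0 : x' s0 = 1 := by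
    rcases eq_or_ne (x' s0) 0 with h0 | h0
    · rw [h0, zero_smul] at hkk; exact absurd hkk hk0
    · exact hone _ h0
  have hkeq : k = k' := by rwa [hx's0, one_smul] at hkk
  obtain ⟨l, hl⟩ : ∃ l, k l ≠ 0 := by
    by_contra h; push_neg at h; exact hk0 (funext h)
  have hkl : k l = 1 := hone _ hl
  have hxeq : x = x' := by
    funext s
    have h := congrFun (key s) l
    rw [← hkeq] at h
    simpa [Pi.smul_apply, smul_eq_mul, hkl] using h
  simp [Prod.ext_iff]
  exact ⟨hkeq, hxeq⟩

/-- Trace-norm bound for the deviation matrix `A`. -/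
theorem traceNorm_deviation_le (n t : ℕ) (hn : 1 ≤ n) (ht : 1 ≤ t) :
    traceNorm (∑ k ∈ Omega n, ∑ i : Fin t → (Fin n → ZMod 2),
        ∑ x ∈ Finset.univ.filter (fun x : Fin t → ZMod 2 => x ≠ 0),
          Matrix.single i (fun s => i s + x s • k) (1 : ℂ))
      ≤ 2 ^ (n * t) * Real.sqrt (2 ^ (n - 1) * (2 ^ t - 1)) := by
  classical
  set A := (∑ k ∈ Omega n, ∑ i : Fin t → (Fin n → ZMod 2),
      ∑ x ∈ Finset.univ.filter (fun x : Fin t → ZMod 2 => x ≠ 0),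
        Matrix.single i (fun s => i s + x s • k) (1 : ℂ)) with hA
  set S := (Omega n) ×ˢ (univ.filter fun x : Fin t → ZMod 2 => x ≠ 0) with hS
  have hcard_m : Fintype.card (Fin t → (Fin n → ZMod 2)) = 2 ^ (n * t) := by
    simp [Fintype.card_fun, ZMod.card]
    rw [← pow_mul]
  have hcardX : (univ.filter fun x : Fin t → ZMod 2 => x ≠ 0).card = 2 ^ t - 1 := by
    rw [Finset.filter_ne']
    rw [Finset.card_erase_of_mem (mem_univ _), Finset.card_univ]
    simp [Fintype.card_fun, ZMod.card]
  have hScard : S.card = 2 ^ (n - 1) * (2 ^ t - 1) := by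
    rw [hS, Finset.card_product, card_Omega_aux n hn, hcardX]
  -- sum of fiber counts over j equals S.card, for each fixed i
  have hfib : ∀ i : Fin t → (Fin n → ZMod 2),
      ∑ j : Fin t → (Fin n → ZMod 2),
        ((S.filter fun p => (fun s => i s + p.2 s • p.1) = j).card : ℝ) = (S.card : ℝ) := by
    intro i
    rw [← Nat.cast_sum]
    congr 1
    exact (Finset.card_eq_sum_card_fiberwise fun p _ => Finset.mem_univ _).symm
  -- the Frobenius norm squared
  have hfrob : ∑ i : Fin t → (Fin n → ZMod 2), ∑ j : Fin t → (Fin n → ZMod 2),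
      Complex.normSq (A i j) = (2 ^ (n * t) : ℝ) * (2 ^ (n - 1) * (2 ^ t - 1) : ℕ) := by
    have hentry : ∀ i j, Complex.normSq (A i j)
        = ((S.filter fun p => (fun s => i s + p.2 s • p.1) = j).card : ℝ) := by
      intro i j
      rw [hA, entry_eq_card_aux n t i j]
      have h01 := card_fiber_le_one_aux n t i j
      interval_cases h : (((Omega n) ×ˢ (univ.filter fun x : Fin t → ZMod 2 => x ≠ 0)).filter
          fun p => (fun s => i s + p.2 s • p.1) = j).card <;> simp [hS, h]
    calc ∑ i : Fin t → (Fin n → ZMod 2), ∑ j : Fin t → (Fin n → ZMod 2),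
          Complex.normSq (A i j)
        = ∑ i : Fin t → (Fin n → ZMod 2), (S.card : ℝ) := by
          refine Finset.sum_congr rfl fun i _ => ?_
          rw [← hfib i]
          exact Finset.sum_congr rfl fun j _ => hentry i j
      _ = (2 ^ (n * t) : ℝ) * (2 ^ (n - 1) * (2 ^ t - 1) : ℕ) := by
          rw [Finset.sum_const, Finset.card_univ, hcard_m, hScard, nsmul_eq_mul]
          push_cast
          ring
  calc traceNorm A
      ≤ Real.sqrt (Fintype.card (Fin t → (Fin n → ZMod 2)) *
          ∑ i, ∑ j, Complex.normSq (A i j)) := traceNorm_le_sqrt_aux A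
    _ = Real.sqrt ((2 ^ (n * t) : ℝ) ^ 2 * (2 ^ (n - 1) * (2 ^ t - 1) : ℕ)) := by
        rw [hfrob, hcard_m]
        push_cast
        ring_nf
    _ = 2 ^ (n * t) * Real.sqrt (2 ^ (n - 1) * (2 ^ t - 1)) := by
        rw [Real.sqrt_mul (by positivity), Real.sqrt_sq (by positivity)]
        congr 1
        have h1 : (1 : ℕ) ≤ 2 ^ t := Nat.one_le_two_pow
        push_cast [Nat.cast_sub h1]
        ring
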